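/- Let λ ≥ 0, k ≥ 0, 0 ≤ α < 1, u > v ≥ 0 integers with u ≥ 1. Let f = h + conj(g) with h(z) = z + ∑_{n≥2} a_n z^n, g(z) = ∑_{n≥1} b_n z^n, |a_1| = 1, |b_1| < 1, and suppose ∑_{n≥1}(ξ_n|a_n| + η_n|b_n|) ≤ 2 where ξ_n, η_n are as in the Al-Oboudi weight definitions. Then f ∈ k-USH(u,v,α,λ), i.e., Re{(1 + k e^{iφ}) D^u f(z)/D^v f(z) − k e^{iφ}} ≥ α for all z ∈ U and all real φ. -/

import Mathlib

open Complex

/-- The Al-Oboudi operator of order `t` applied to `f = h + conj g`, where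
`h(z) = z + ∑_{n≥2} a_n z^n` and `g(z) = ∑_{n≥1} b_n z^n`:
`D^t f(z) = D^t h(z) + conj((−1)^t D^t g(z))`. -/
noncomputable def alOboudiD (lam : ℝ) (t : ℕ) (a b : ℕ → ℂ) (z : ℂ) : ℂ :=
  (z + ∑' n : ℕ, ((1 + ((n : ℝ) + 1) * lam) ^ t : ℝ) * a (n + 2) * z ^ (n + 2)) +
    (starRingEnd ℂ)
      ((-1 : ℂ) ^ t * ∑' n : ℕ, ((1 + (n : ℝ) * lam) ^ t : ℝ) * b (n + 1) * z ^ (n + 1))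

private lemma norm_tsum_le_of_le {f : ℕ → ℂ} {g : ℕ → ℝ} (hg : Summable g)
    (h : ∀ n, ‖f n‖ ≤ g n) : ‖∑' n, f n‖ ≤ ∑' n, g n := by
  have hf : Summable fun n => ‖f n‖ := hg.of_nonneg_of_le (fun n => norm_nonneg _) h
  exact (norm_tsum_le_tsum_norm hf).trans (Summable.tsum_le_tsum h hf hg)

private lemma re_ge_aux {al : ℝ} (hα : al < 1) {x y τ : ℂ} (hy : y ≠ 0)
    (h : ‖(1 + τ) * (x - y)‖ ≤ ‖(1 + τ) * x + (1 - 2*(al:ℂ) - τ) * y‖) :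
    al ≤ ((1 + τ) * x / y - τ).re := by
  have hyn : 0 < ‖y‖ := norm_pos_iff.mpr hy
  set w : ℂ := (1 + τ) * x / y - τ with hw
  have h1 : (w - 1) * y = (1 + τ) * (x - y) := by
    rw [hw]; field_simp; ring
  have h2 : (w + (1 - 2*(al:ℂ))) * y = (1 + τ) * x + (1 - 2*(al:ℂ) - τ) * y := by
    rw [hw]; field_simp; ring
  have h4 : ‖w - 1‖ ≤ ‖w + (1 - 2*(al:ℂ))‖ := by
    have h3 : ‖w - 1‖ * ‖y‖ ≤ ‖w + (1 - 2*(al:ℂ))‖ * ‖y‖ := by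
      rw [← norm_mul, ← norm_mul, h1, h2]; exact h
    exact le_of_mul_le_mul_right h3 hyn
  have h5 : ‖w - 1‖^2 ≤ ‖w + (1 - 2*(al:ℂ))‖^2 := pow_le_pow_left₀ (norm_nonneg _) h4 2
  have e1 : ‖w - 1‖^2 = (w.re - 1)^2 + w.im^2 := by
    rw [Complex.sq_norm, Complex.normSq_apply]
    simp [Complex.sub_re, Complex.sub_im]; ring
  have e2 : ‖w + (1 - 2*(al:ℂ))‖^2 = (w.re + (1 - 2*al))^2 + w.im^2 := by
    rw [Complex.sq_norm, Complex.normSq_apply]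
    simp [Complex.add_re, Complex.add_im, Complex.sub_re, Complex.sub_im]; ring
  rw [e1, e2] at h5
  nlinarith [h5]

private lemma bound_helper {r s t nz : ℝ} (hr : 0 ≤ r) (hrs : r ≤ s) (ht : 0 ≤ t)
    (hz : 0 ≤ nz) (h1 : nz ≤ 1) : r * (t * nz) ≤ s * t := by
  nlinarith [mul_nonneg hr ht, mul_le_mul_of_nonneg_left h1 (mul_nonneg hr ht),
    mul_le_mul_of_nonneg_right hrs ht]

private lemma bound_helper2 {r s t nz w : ℝ} (hr : 0 ≤ r) (hrs : r ≤ s) (ht : 0 ≤ t)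
    (hnz : nz ≤ w) (hw : 0 ≤ nz) : r * (t * nz) ≤ w * (s * t) := by
  nlinarith [mul_le_mul_of_nonneg_right (mul_le_mul hrs hnz hw (hr.trans hrs)) ht]

private lemma norm_combo_le {r s kk : ℝ} (hr : 0 ≤ r) (hs : 0 ≤ s) (τ c : ℂ) (hτ : ‖τ‖ = kk) :
    ‖(r:ℂ) * c + τ * ((s:ℝ):ℂ) * c‖ ≤ (r + kk*s) * ‖c‖ := by
  refine (norm_add_le _ _).trans (le_of_eq ?_)
  rw [norm_mul, norm_mul, norm_mul, Complex.norm_real, Complex.norm_real,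
    Real.norm_of_nonneg hr, Real.norm_of_nonneg hs, hτ]
  ring

set_option maxHeartbeats 1000000 in
/-- sufficiency of the coefficient condition for membership in k-USH(u,v,α,λ). -/
theorem kUSH_sufficient (lam k alpha : ℝ) (u v : ℕ)
    (hlam : 0 ≤ lam) (hk : 0 ≤ k) (halpha0 : 0 ≤ alpha) (halpha1 : alpha < 1)
    (hu : 1 ≤ u) (huv : v < u)
    (a b : ℕ → ℂ) (ha1 : ‖a 1‖ = 1) (hb1 : ‖b 1‖ < 1)
    (xi eta : ℕ → ℝ)
    (hxi : ∀ n : ℕ, xi n = (1 + ((n : ℝ) - 1) * lam) ^ v +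
      ((1 + ((n : ℝ) - 1) * lam) ^ u - (1 + ((n : ℝ) - 1) * lam) ^ v) * (1 + k) / (1 - alpha))
    (heta : ∀ n : ℕ, eta n = (-1 : ℝ) ^ (u - v) * (1 + ((n : ℝ) - 1) * lam) ^ v +
      ((1 + ((n : ℝ) - 1) * lam) ^ u -
        (-1 : ℝ) ^ (u - v) * (1 + ((n : ℝ) - 1) * lam) ^ v) * (1 + k) / (1 - alpha))
    (hsa : Summable (fun n : ℕ => xi (n + 2) * ‖a (n + 2)‖))
    (hsb : Summable (fun n : ℕ => eta (n + 1) * ‖b (n + 1)‖))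
    (hcoef : xi 1 * ‖a 1‖ + (∑' n : ℕ, xi (n + 2) * ‖a (n + 2)‖) +
             (∑' n : ℕ, eta (n + 1) * ‖b (n + 1)‖) ≤ 2) :
    ∀ z : ℂ, ‖z‖ < 1 → z ≠ 0 → ∀ φ : ℝ,
      alpha ≤ ((1 + (k : ℂ) * Complex.exp (φ * Complex.I)) *
          alOboudiD lam u a b z / alOboudiD lam v a b z -
          (k : ℂ) * Complex.exp (φ * Complex.I)).re := by
  intro z hz hz0 φ
  have hone : (0:ℝ) < 1 - alpha := by linarith
  have hone' : (1:ℝ) - alpha ≠ 0 := ne_of_gt hone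
  have hm1 : (1:ℝ) ≤ (1 + k) / (1 - alpha) := by
    rw [le_div_iff₀ hone]; linarith
  set τ : ℂ := (k:ℂ) * Complex.exp (↑φ * Complex.I) with hτdef
  have hτ : ‖τ‖ = k := by
    rw [hτdef]
    simp [Complex.norm_exp, _root_.abs_of_nonneg hk]
  have hτc : ‖(starRingEnd ℂ) τ‖ = k := by rw [RCLike.norm_conj, hτ]
  -- basic coefficient facts
  have hbA : ∀ n : ℕ, (1:ℝ) ≤ 1 + ((n:ℝ)+1)*lam := by
    intro n
    have : (0:ℝ) ≤ ((n:ℝ)+1)*lam := by positivity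
    linarith
  have hbB : ∀ n : ℕ, (1:ℝ) ≤ 1 + (n:ℝ)*lam := by
    intro n
    have : (0:ℝ) ≤ (n:ℝ)*lam := by positivity
    linarith
  have hpv1 : ∀ n : ℕ, (1:ℝ) ≤ (1 + ((n:ℝ)+1)*lam)^v := fun n => one_le_pow₀ (hbA n)
  have hpu1 : ∀ n : ℕ, (1:ℝ) ≤ (1 + ((n:ℝ)+1)*lam)^u := fun n => one_le_pow₀ (hbA n)
  have hqv1 : ∀ n : ℕ, (1:ℝ) ≤ (1 + (n:ℝ)*lam)^v := fun n => one_le_pow₀ (hbB n)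
  have hqu1 : ∀ n : ℕ, (1:ℝ) ≤ (1 + (n:ℝ)*lam)^u := fun n => one_le_pow₀ (hbB n)
  have hpvu : ∀ n : ℕ, (1 + ((n:ℝ)+1)*lam)^v ≤ (1 + ((n:ℝ)+1)*lam)^u :=
    fun n => pow_le_pow_right₀ (hbA n) (le_of_lt huv)
  have hqvu : ∀ n : ℕ, (1 + (n:ℝ)*lam)^v ≤ (1 + (n:ℝ)*lam)^u :=
    fun n => pow_le_pow_right₀ (hbB n) (le_of_lt huv)
  have hεcases : ((-1:ℝ))^(u-v) = 1 ∨ ((-1:ℝ))^(u-v) = -1 := by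
    rcases Nat.even_or_odd (u-v) with he | he
    · exact Or.inl he.neg_one_pow
    · exact Or.inr he.neg_one_pow
  have hquε : ∀ n : ℕ, (-1:ℝ)^(u-v) * (1+(n:ℝ)*lam)^v ≤ (1+(n:ℝ)*lam)^u := by
    intro n; rcases hεcases with h | h <;> rw [h] <;> nlinarith [hqvu n, hqv1 n]
  -- rewritten xi / eta
  have hxiE : ∀ n : ℕ, xi (n+2) = (1+((n:ℝ)+1)*lam)^v +
      ((1+((n:ℝ)+1)*lam)^u - (1+((n:ℝ)+1)*lam)^v)*(1+k)/(1-alpha) := by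
    intro n; rw [hxi]; push_cast; ring_nf
  have hetaE : ∀ n : ℕ, eta (n+1) = (-1:ℝ)^(u-v)*(1+(n:ℝ)*lam)^v +
      ((1+(n:ℝ)*lam)^u - (-1:ℝ)^(u-v)*(1+(n:ℝ)*lam)^v)*(1+k)/(1-alpha) := by
    intro n; rw [heta]; push_cast; ring_nf
  have hxiA : ∀ n : ℕ, (2-2*alpha) * xi (n+2) =
      2*(1+k)*(1+((n:ℝ)+1)*lam)^u - (2*k+2*alpha)*(1+((n:ℝ)+1)*lam)^v := by
    intro n; rw [hxiE]; field_simp; ring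
  have hetaA : ∀ n : ℕ, (2-2*alpha) * eta (n+1) =
      2*(1+k)*(1+(n:ℝ)*lam)^u - (2*k+2*alpha)*((-1:ℝ)^(u-v)*(1+(n:ℝ)*lam)^v) := by
    intro n; rw [hetaE]; field_simp; ring
  have key : ∀ c d : ℝ, d ≤ c → c ≤ d + (c - d)*(1+k)/(1-alpha) := by
    intro c d h
    rw [mul_div_assoc]
    nlinarith [mul_le_mul_of_nonneg_left hm1 (sub_nonneg.2 h)]
  have hxige : ∀ n : ℕ, (1+((n:ℝ)+1)*lam)^u ≤ xi (n+2) := by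
    intro n; rw [hxiE]; exact key _ _ (hpvu n)
  have hetage : ∀ n : ℕ, (1+(n:ℝ)*lam)^u ≤ eta (n+1) := by
    intro n; rw [hetaE]; exact key _ _ (hquε n)
  have hxipos : ∀ n : ℕ, (1:ℝ) ≤ xi (n+2) := fun n => (hpu1 n).trans (hxige n)
  have hetapos : ∀ n : ℕ, (1:ℝ) ≤ eta (n+1) := fun n => (hqu1 n).trans (hetage n)
  -- z facts
  have hz1 : ‖z‖ ≤ 1 := le_of_lt hz
  have hzp : ∀ m : ℕ, ‖z‖^m ≤ 1 := fun m => pow_le_one₀ (norm_nonneg z) hz1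
  have hzz : ∀ n : ℕ, ‖z‖^(n+2) ≤ ‖z‖ := by
    intro n; rw [pow_succ]
    exact mul_le_of_le_one_left (norm_nonneg z) (hzp (n+1))
  have hzz1 : ∀ n : ℕ, ‖z‖^(n+2) ≤ ‖z‖^2 := by
    intro n
    calc ‖z‖^(n+2) = ‖z‖^n * ‖z‖^2 := by ring
      _ ≤ 1 * ‖z‖^2 := by
          apply mul_le_mul_of_nonneg_right (hzp n) (by positivity)
      _ = ‖z‖^2 := one_mul _
  -- the series pieces
  set fau : ℕ → ℂ := fun n => (((1 + ((n:ℝ)+1)*lam)^u : ℝ) : ℂ) * a (n+2) * z^(n+2) with hfau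
  set fav : ℕ → ℂ := fun n => (((1 + ((n:ℝ)+1)*lam)^v : ℝ) : ℂ) * a (n+2) * z^(n+2) with hfav
  set fbu : ℕ → ℂ := fun n => (((1 + (n:ℝ)*lam)^u : ℝ) : ℂ) * b (n+1) * z^(n+1) with hfbu
  set fbv : ℕ → ℂ := fun n => (((1 + (n:ℝ)*lam)^v : ℝ) : ℂ) * b (n+1) * z^(n+1) with hfbv
  have hAeq : alOboudiD lam u a b z = (z + ∑' n, fau n) + (starRingEnd ℂ) ((-1:ℂ)^u * ∑' n, fbu n) := by
    rw [hfau, hfbu]; rfl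
  have hBeq : alOboudiD lam v a b z = (z + ∑' n, fav n) + (starRingEnd ℂ) ((-1:ℂ)^v * ∑' n, fbv n) := by
    rw [hfav, hfbv]; rfl
  -- norms of terms
  have hterm : ∀ (r : ℝ) (c : ℂ) (m : ℕ), 0 ≤ r → ‖(r:ℂ) * c * z^m‖ = r * (‖c‖ * ‖z‖^m) := by
    intro r c m hr
    rw [norm_mul, norm_mul, Complex.norm_real, Real.norm_of_nonneg hr, norm_pow]; ring
  -- summability
  have hsau : Summable fau := by
    apply Summable.of_norm_bounded hsa
    intro n
    rw [hfau, hterm _ _ _ (by positivity : (0:ℝ) ≤ (1 + ((n:ℝ)+1)*lam)^u)]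
    exact bound_helper (by positivity) (hxige n) (norm_nonneg _) (by positivity) (hzp _)
  have hsav : Summable fav := by
    apply Summable.of_norm_bounded hsa
    intro n
    rw [hfav, hterm _ _ _ (by positivity : (0:ℝ) ≤ (1 + ((n:ℝ)+1)*lam)^v)]
    exact bound_helper (by positivity) ((hpvu n).trans (hxige n)) (norm_nonneg _) (by positivity) (hzp _)
  have hsbu : Summable fbu := by
    apply Summable.of_norm_bounded hsb
    intro n
    rw [hfbu, hterm _ _ _ (by positivity : (0:ℝ) ≤ (1 + (n:ℝ)*lam)^u)]
    exact bound_helper (by positivity) (hetage n) (norm_nonneg _) (by positivity) (hzp _)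
  have hsbv : Summable fbv := by
    apply Summable.of_norm_bounded hsb
    intro n
    rw [hfbv, hterm _ _ _ (by positivity : (0:ℝ) ≤ (1 + (n:ℝ)*lam)^v)]
    exact bound_helper (by positivity) ((hqvu n).trans (hetage n)) (norm_nonneg _) (by positivity) (hzp _)
  -- sign fact
  have hpowv : ((-1:ℂ))^v = (-1:ℂ)^u * (-1:ℂ)^(u-v) := by
    rw [← pow_add, show u + (u - v) = v + 2*(u-v) by omega, pow_add, pow_mul,
      neg_one_sq, one_pow, mul_one]
  -- difference identity
  have hd1 : alOboudiD lam u a b z - alOboudiD lam v a b z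
      = (∑' n, (fau n - fav n))
        + (starRingEnd ℂ) ((-1:ℂ)^u * ∑' n, (fbu n - (-1:ℂ)^(u-v) * fbv n)) := by
    have e1 : ∑' n, (fau n - fav n) = (∑' n, fau n) - ∑' n, fav n := Summable.tsum_sub hsau hsav
    have e2 : ∑' n, (fbu n - (-1:ℂ)^(u-v) * fbv n)
        = (∑' n, fbu n) - (-1:ℂ)^(u-v) * ∑' n, fbv n := by
      rw [Summable.tsum_sub hsbu (hsbv.mul_left _), tsum_mul_left]
    rw [hAeq, hBeq, e1, e2, mul_sub, ← mul_assoc, ← hpowv, map_sub]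
    ring
  -- combination identity
  have hQ : (1+τ) * alOboudiD lam u a b z + (1 - 2*(alpha:ℂ) - τ) * alOboudiD lam v a b z
      = (2 - 2*(alpha:ℂ)) * z
        + (∑' n, ((1+τ) * fau n + (1 - 2*(alpha:ℂ) - τ) * fav n))
        + (starRingEnd ℂ) ((-1:ℂ)^u * ∑' n, ((1 + (starRingEnd ℂ) τ) * fbu n
            + (1 - 2*(alpha:ℂ) - (starRingEnd ℂ) τ) * ((-1:ℂ)^(u-v) * fbv n))) := by
    have e1 : ∑' n, ((1+τ) * fau n + (1 - 2*(alpha:ℂ) - τ) * fav n)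
        = (1+τ) * ∑' n, fau n + (1 - 2*(alpha:ℂ) - τ) * ∑' n, fav n := by
      rw [Summable.tsum_add (hsau.mul_left _) (hsav.mul_left _), tsum_mul_left, tsum_mul_left]
    have e2 : ∑' n, ((1 + (starRingEnd ℂ) τ) * fbu n
          + (1 - 2*(alpha:ℂ) - (starRingEnd ℂ) τ) * ((-1:ℂ)^(u-v) * fbv n))
        = (1 + (starRingEnd ℂ) τ) * ∑' n, fbu n
          + (1 - 2*(alpha:ℂ) - (starRingEnd ℂ) τ) * ((-1:ℂ)^(u-v) * ∑' n, fbv n) := by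
      rw [Summable.tsum_add (hsbu.mul_left _) ((hsbv.mul_left _).mul_left _), tsum_mul_left,
        tsum_mul_left, tsum_mul_left]
    rw [hAeq, hBeq, e1, e2]
    simp only [map_add, map_mul, map_sub, map_one, map_pow, map_neg, map_ofNat,
      Complex.conj_conj, Complex.conj_ofReal]
    rw [hpowv]
    ring
  -- the real comparison sequences
  set Pa : ℕ → ℝ := fun n => ((1+((n:ℝ)+1)*lam)^u - (1+((n:ℝ)+1)*lam)^v) * (‖a (n+2)‖ * ‖z‖^(n+2)) with hPadef
  set Pb : ℕ → ℝ := fun n => ((1+(n:ℝ)*lam)^u - (-1:ℝ)^(u-v)*(1+(n:ℝ)*lam)^v) * (‖b (n+1)‖ * ‖z‖^(n+1)) with hPbdef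
  set Qa : ℕ → ℝ := fun n => ‖(1+τ) * fau n + (1 - 2*(alpha:ℂ) - τ) * fav n‖ with hQadef
  set Qb : ℕ → ℝ := fun n => ‖(1 + (starRingEnd ℂ) τ) * fbu n
      + (1 - 2*(alpha:ℂ) - (starRingEnd ℂ) τ) * ((-1:ℂ)^(u-v) * fbv n)‖ with hQbdef
  have hPa_eq : ∀ n, ‖fau n - fav n‖ = Pa n := by
    intro n
    have e : fau n - fav n
        = ((((1+((n:ℝ)+1)*lam)^u - (1+((n:ℝ)+1)*lam)^v : ℝ)):ℂ) * a (n+2) * z^(n+2) := by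
      rw [hfau, hfav]; push_cast; ring
    rw [e, hterm _ _ _ (sub_nonneg.2 (hpvu n)), hPadef]
  have hPb_eq : ∀ n, ‖fbu n - (-1:ℂ)^(u-v) * fbv n‖ = Pb n := by
    intro n
    have e : fbu n - (-1:ℂ)^(u-v) * fbv n
        = ((((1+(n:ℝ)*lam)^u - (-1:ℝ)^(u-v)*(1+(n:ℝ)*lam)^v : ℝ)):ℂ) * b (n+1) * z^(n+1) := by
      rw [hfbu, hfbv]; push_cast; ring
    rw [e, hterm _ _ _ (sub_nonneg.2 (hquε n)), hPbdef]
  have hPa_nonneg : ∀ n, 0 ≤ Pa n := fun n => (norm_nonneg _).trans (le_of_eq (hPa_eq n))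
  have hPb_nonneg : ∀ n, 0 ≤ Pb n := fun n => (norm_nonneg _).trans (le_of_eq (hPb_eq n))
  have hQa_le : ∀ n, Qa n ≤
      ((1+((n:ℝ)+1)*lam)^u + (1-2*alpha)*(1+((n:ℝ)+1)*lam)^v
        + k*((1+((n:ℝ)+1)*lam)^u - (1+((n:ℝ)+1)*lam)^v)) * (‖a (n+2)‖ * ‖z‖^(n+2)) := by
    intro n
    have e : (1+τ) * fau n + (1 - 2*(alpha:ℂ) - τ) * fav n
        = (((1+((n:ℝ)+1)*lam)^u + (1-2*alpha)*(1+((n:ℝ)+1)*lam)^v : ℝ):ℂ) * (a (n+2) * z^(n+2))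
          + τ * ((((1+((n:ℝ)+1)*lam)^u - (1+((n:ℝ)+1)*lam)^v : ℝ)):ℂ) * (a (n+2) * z^(n+2)) := by
      rw [hfau, hfav]; push_cast; ring
    rw [hQadef]
    simp only []
    rw [e]
    refine (norm_combo_le ?_ (sub_nonneg.2 (hpvu n)) τ _ hτ).trans (le_of_eq ?_)
    · nlinarith [hpvu n, hpv1 n]
    · rw [norm_mul, norm_pow]
  have hQb_le : ∀ n, Qb n ≤
      ((1+(n:ℝ)*lam)^u + (1-2*alpha)*((-1:ℝ)^(u-v)*(1+(n:ℝ)*lam)^v)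
        + k*((1+(n:ℝ)*lam)^u - (-1:ℝ)^(u-v)*(1+(n:ℝ)*lam)^v)) * (‖b (n+1)‖ * ‖z‖^(n+1)) := by
    intro n
    have e : (1 + (starRingEnd ℂ) τ) * fbu n
          + (1 - 2*(alpha:ℂ) - (starRingEnd ℂ) τ) * ((-1:ℂ)^(u-v) * fbv n)
        = (((1+(n:ℝ)*lam)^u + (1-2*alpha)*((-1:ℝ)^(u-v)*(1+(n:ℝ)*lam)^v) : ℝ):ℂ) * (b (n+1) * z^(n+1))
          + (starRingEnd ℂ) τ * ((((1+(n:ℝ)*lam)^u - (-1:ℝ)^(u-v)*(1+(n:ℝ)*lam)^v : ℝ)):ℂ) * (b (n+1) * z^(n+1)) := by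
      rw [hfbu, hfbv]; push_cast; ring
    rw [hQbdef]
    simp only []
    rw [e]
    refine (norm_combo_le ?_ (sub_nonneg.2 (hquε n)) _ _ hτc).trans (le_of_eq ?_)
    · rcases hεcases with h | h <;> rw [h] <;> nlinarith [hqvu n, hqv1 n]
    · rw [norm_mul, norm_pow]
  -- combined per-term estimates
  have hfinal_a : ∀ n, (1+k) * Pa n + Qa n ≤ (2-2*alpha)*‖z‖*(xi (n+2) * ‖a (n+2)‖) := by
    intro n
    have h1 := hQa_le n
    have e : (1+k) * Pa n
          + ((1+((n:ℝ)+1)*lam)^u + (1-2*alpha)*(1+((n:ℝ)+1)*lam)^v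
            + k*((1+((n:ℝ)+1)*lam)^u - (1+((n:ℝ)+1)*lam)^v)) * (‖a (n+2)‖ * ‖z‖^(n+2))
        = ((2-2*alpha) * xi (n+2)) * (‖a (n+2)‖ * ‖z‖^(n+2)) := by
      rw [hxiA n, hPadef]; ring
    have h2 : ((2-2*alpha) * xi (n+2)) * (‖a (n+2)‖ * ‖z‖^(n+2))
        ≤ (2-2*alpha)*‖z‖*(xi (n+2) * ‖a (n+2)‖) := by
      have hc : (0:ℝ) ≤ (2-2*alpha) * xi (n+2) := by nlinarith [hxipos n]
      calc ((2-2*alpha) * xi (n+2)) * (‖a (n+2)‖ * ‖z‖^(n+2))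
          ≤ ((2-2*alpha) * xi (n+2)) * (‖a (n+2)‖ * ‖z‖) := by
            exact mul_le_mul_of_nonneg_left
              (mul_le_mul_of_nonneg_left (hzz n) (norm_nonneg _)) hc
        _ = (2-2*alpha)*‖z‖*(xi (n+2) * ‖a (n+2)‖) := by ring
    linarith
  have hfinal_b : ∀ n, (1+k) * Pb n + Qb n ≤ (2-2*alpha)*‖z‖*(eta (n+1) * ‖b (n+1)‖) := by
    intro n
    have h1 := hQb_le n
    have e : (1+k) * Pb n
          + ((1+(n:ℝ)*lam)^u + (1-2*alpha)*((-1:ℝ)^(u-v)*(1+(n:ℝ)*lam)^v)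
            + k*((1+(n:ℝ)*lam)^u - (-1:ℝ)^(u-v)*(1+(n:ℝ)*lam)^v)) * (‖b (n+1)‖ * ‖z‖^(n+1))
        = ((2-2*alpha) * eta (n+1)) * (‖b (n+1)‖ * ‖z‖^(n+1)) := by
      rw [hetaA n, hPbdef]; ring
    have h2 : ((2-2*alpha) * eta (n+1)) * (‖b (n+1)‖ * ‖z‖^(n+1))
        ≤ (2-2*alpha)*‖z‖*(eta (n+1) * ‖b (n+1)‖) := by
      have hc : (0:ℝ) ≤ (2-2*alpha) * eta (n+1) := by nlinarith [hetapos n]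
      have hzn : ‖z‖^(n+1) ≤ ‖z‖ := by
        rw [pow_succ]
        exact mul_le_of_le_one_left (norm_nonneg z) (hzp n)
      calc ((2-2*alpha) * eta (n+1)) * (‖b (n+1)‖ * ‖z‖^(n+1))
          ≤ ((2-2*alpha) * eta (n+1)) * (‖b (n+1)‖ * ‖z‖) := by
            exact mul_le_mul_of_nonneg_left
              (mul_le_mul_of_nonneg_left hzn (norm_nonneg _)) hc
        _ = (2-2*alpha)*‖z‖*(eta (n+1) * ‖b (n+1)‖) := by ring
    linarith
  -- summability of the real series
  have hMaS : Summable (fun n => (2-2*alpha)*‖z‖*(xi (n+2) * ‖a (n+2)‖)) :=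
    hsa.mul_left _
  have hMbS : Summable (fun n => (2-2*alpha)*‖z‖*(eta (n+1) * ‖b (n+1)‖)) :=
    hsb.mul_left _
  have hPaS : Summable Pa := by
    refine Summable.of_nonneg_of_le hPa_nonneg (fun n => ?_) hMaS
    have := hfinal_a n
    have h1 : 0 ≤ Qa n := norm_nonneg _
    nlinarith [hPa_nonneg n]
  have hPbS : Summable Pb := by
    refine Summable.of_nonneg_of_le hPb_nonneg (fun n => ?_) hMbS
    have := hfinal_b n
    have h1 : 0 ≤ Qb n := norm_nonneg _
    nlinarith [hPb_nonneg n]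
  have hQaS : Summable Qa := by
    refine Summable.of_nonneg_of_le (fun n => norm_nonneg _) (fun n => ?_) hMaS
    have := hfinal_a n
    nlinarith [hPa_nonneg n]
  have hQbS : Summable Qb := by
    refine Summable.of_nonneg_of_le (fun n => norm_nonneg _) (fun n => ?_) hMbS
    have := hfinal_b n
    nlinarith [hPb_nonneg n]
  -- summed estimates
  have hsumA : (1+k) * (∑' n, Pa n) + (∑' n, Qa n)
      ≤ (2-2*alpha)*‖z‖*(∑' n, xi (n+2) * ‖a (n+2)‖) := by
    have eL : ∑' n, ((1+k) * Pa n + Qa n) = (1+k) * (∑' n, Pa n) + (∑' n, Qa n) := by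
      rw [Summable.tsum_add (hPaS.mul_left _) hQaS, tsum_mul_left]
    have eR : ∑' n, ((2-2*alpha)*‖z‖*(xi (n+2) * ‖a (n+2)‖))
        = (2-2*alpha)*‖z‖*(∑' n, xi (n+2) * ‖a (n+2)‖) := tsum_mul_left
    rw [← eL, ← eR]
    exact Summable.tsum_le_tsum hfinal_a ((hPaS.mul_left _).add hQaS) hMaS
  have hsumB : (1+k) * (∑' n, Pb n) + (∑' n, Qb n)
      ≤ (2-2*alpha)*‖z‖*(∑' n, eta (n+1) * ‖b (n+1)‖) := by
    have eL : ∑' n, ((1+k) * Pb n + Qb n) = (1+k) * (∑' n, Pb n) + (∑' n, Qb n) := by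
      rw [Summable.tsum_add (hPbS.mul_left _) hQbS, tsum_mul_left]
    have eR : ∑' n, ((2-2*alpha)*‖z‖*(eta (n+1) * ‖b (n+1)‖))
        = (2-2*alpha)*‖z‖*(∑' n, eta (n+1) * ‖b (n+1)‖) := tsum_mul_left
    rw [← eL, ← eR]
    exact Summable.tsum_le_tsum hfinal_b ((hPbS.mul_left _).add hQbS) hMbS
  -- coefficient sum bound
  have hxi1 : xi 1 = 1 := by rw [hxi]; norm_num
  have hS1 : (∑' n, xi (n + 2) * ‖a (n + 2)‖) + (∑' n, eta (n + 1) * ‖b (n + 1)‖) ≤ 1 := by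
    rw [hxi1, ha1] at hcoef; linarith
  -- norm of the numerator difference
  have hPnorm : ‖(1+τ) * (alOboudiD lam u a b z - alOboudiD lam v a b z)‖
      ≤ (1+k) * ((∑' n, Pa n) + (∑' n, Pb n)) := by
    rw [norm_mul, hd1]
    have h1 : ‖(1:ℂ)+τ‖ ≤ 1+k := by
      refine (norm_add_le _ _).trans ?_
      rw [norm_one, hτ]
    have h2 : ‖(∑' n, (fau n - fav n))
          + (starRingEnd ℂ) ((-1:ℂ)^u * ∑' n, (fbu n - (-1:ℂ)^(u-v) * fbv n))‖
        ≤ (∑' n, Pa n) + (∑' n, Pb n) := by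
      refine (norm_add_le _ _).trans (add_le_add ?_ ?_)
      · exact norm_tsum_le_of_le hPaS (fun n => le_of_eq (hPa_eq n))
      · rw [RCLike.norm_conj, norm_mul, norm_pow, norm_neg, norm_one, one_pow, one_mul]
        exact norm_tsum_le_of_le hPbS (fun n => le_of_eq (hPb_eq n))
    have h3 : (0:ℝ) ≤ (∑' n, Pa n) + (∑' n, Pb n) :=
      add_nonneg (tsum_nonneg hPa_nonneg) (tsum_nonneg hPb_nonneg)
    exact mul_le_mul h1 h2 (norm_nonneg _) (by linarith)
  -- lower bound for the denominator-side combination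
  have hQnorm : (2-2*alpha)*‖z‖ - (∑' n, Qa n) - (∑' n, Qb n)
      ≤ ‖(1+τ) * alOboudiD lam u a b z + (1 - 2*(alpha:ℂ) - τ) * alOboudiD lam v a b z‖ := by
    rw [hQ]
    have t1 : ‖(2 - 2*(alpha:ℂ)) * z‖ = (2-2*alpha)*‖z‖ := by
      rw [norm_mul]
      congr 1
      have e : (2 - 2*(alpha:ℂ)) = ((2-2*alpha : ℝ):ℂ) := by push_cast; ring
      rw [e, Complex.norm_real, Real.norm_of_nonneg (by linarith)]
    have t2 : ‖∑' n, ((1+τ) * fau n + (1 - 2*(alpha:ℂ) - τ) * fav n)‖ ≤ ∑' n, Qa n := by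
      refine norm_tsum_le_of_le hQaS (fun n => le_of_eq ?_)
      rw [hQadef]
    have t3 : ‖(starRingEnd ℂ) ((-1:ℂ)^u * ∑' n, ((1 + (starRingEnd ℂ) τ) * fbu n
          + (1 - 2*(alpha:ℂ) - (starRingEnd ℂ) τ) * ((-1:ℂ)^(u-v) * fbv n)))‖ ≤ ∑' n, Qb n := by
      rw [RCLike.norm_conj, norm_mul, norm_pow, norm_neg, norm_one, one_pow, one_mul]
      refine norm_tsum_le_of_le hQbS (fun n => le_of_eq ?_)
      rw [hQbdef]
    set X : ℂ := (2 - 2*(alpha:ℂ)) * z with hX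
    set S : ℂ := ∑' n, ((1+τ) * fau n + (1 - 2*(alpha:ℂ) - τ) * fav n) with hS
    set C : ℂ := (starRingEnd ℂ) ((-1:ℂ)^u * ∑' n, ((1 + (starRingEnd ℂ) τ) * fbu n
          + (1 - 2*(alpha:ℂ) - (starRingEnd ℂ) τ) * ((-1:ℂ)^(u-v) * fbv n))) with hC
    have t4 : ‖X‖ ≤ ‖X + S + C‖ + ‖S‖ + ‖C‖ := by
      have e : X = ((X + S + C) - S) - C := by ring
      calc ‖X‖ = ‖((X + S + C) - S) - C‖ := by rw [← e]
        _ ≤ ‖(X + S + C) - S‖ + ‖C‖ := norm_sub_le _ _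
        _ ≤ (‖X + S + C‖ + ‖S‖) + ‖C‖ := add_le_add (norm_sub_le _ _) le_rfl
    rw [t1] at t4
    linarith
  -- main inequality
  have hmain : ‖(1+τ) * (alOboudiD lam u a b z - alOboudiD lam v a b z)‖
      ≤ ‖(1+τ) * alOboudiD lam u a b z + (1 - 2*(alpha:ℂ) - τ) * alOboudiD lam v a b z‖ := by
    have hnn : (0:ℝ) ≤ (2-2*alpha)*‖z‖ := by
      have := norm_nonneg z; nlinarith
    have hfin : (2-2*alpha)*‖z‖*(∑' n, xi (n+2) * ‖a (n+2)‖)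
        + (2-2*alpha)*‖z‖*(∑' n, eta (n+1) * ‖b (n+1)‖) ≤ (2-2*alpha)*‖z‖ := by
      nlinarith [mul_le_mul_of_nonneg_left hS1 hnn]
    have hQa_nonneg : (0:ℝ) ≤ ∑' n, Qa n := tsum_nonneg (fun n => norm_nonneg _)
    have hQb_nonneg : (0:ℝ) ≤ ∑' n, Qb n := tsum_nonneg (fun n => norm_nonneg _)
    linarith [hPnorm, hQnorm, hsumA, hsumB]
  -- the denominator is nonzero
  have hfavN : ‖∑' n, fav n‖ ≤ ‖z‖^2 * (∑' n, xi (n+2) * ‖a (n+2)‖) := by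
    have e : ‖z‖^2 * (∑' n, xi (n+2) * ‖a (n+2)‖)
        = ∑' n, ‖z‖^2 * (xi (n+2) * ‖a (n+2)‖) := tsum_mul_left.symm
    rw [e]
    refine norm_tsum_le_of_le (hsa.mul_left _) (fun n => ?_)
    rw [hfav, hterm _ _ _ (by positivity : (0:ℝ) ≤ (1 + ((n:ℝ)+1)*lam)^v)]
    exact bound_helper2 (by positivity) ((hpvu n).trans (hxige n)) (norm_nonneg _)
      (hzz1 n) (by positivity)
  have hfbv_norm : ∀ n, ‖fbv n‖ = (1+(n:ℝ)*lam)^v * (‖b (n+1)‖ * ‖z‖^(n+1)) := by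
    intro n
    rw [hfbv, hterm _ _ _ (by positivity : (0:ℝ) ≤ (1 + (n:ℝ)*lam)^v)]
  have hfbvS : Summable (fun n => ‖fbv n‖) := hsbv.norm
  have hfbvN : ∑' n, ‖fbv n‖ ≤ ‖b 1‖ * ‖z‖ + ‖z‖^2 * (∑' n, eta (n+2) * ‖b (n+2)‖) := by
    rw [Summable.tsum_eq_zero_add hfbvS]
    have e0 : ‖fbv 0‖ = ‖b 1‖ * ‖z‖ := by
      rw [hfbv_norm 0]
      norm_num
    rw [e0]
    have etail : ∑' n, ‖fbv (n+1)‖ ≤ ‖z‖^2 * (∑' n, eta (n+2) * ‖b (n+2)‖) := by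
      have e : ‖z‖^2 * (∑' n, eta (n+2) * ‖b (n+2)‖)
          = ∑' n, ‖z‖^2 * (eta (n+2) * ‖b (n+2)‖) := tsum_mul_left.symm
      rw [e]
      have hsb2 : Summable (fun n : ℕ => eta (n+2) * ‖b (n+2)‖) := by
        have := (summable_nat_add_iff 1).2 hsb
        exact this
      refine Summable.tsum_le_tsum (fun n => ?_) (hfbvS.comp_injective (add_left_injective 1)) (hsb2.mul_left _)
      rw [hfbv_norm (n+1)]
      have hc1 : (1 + (((n+1):ℕ):ℝ)*lam)^v ≤ eta (n+2) := le_trans (hqvu (n+1)) (hetage (n+1))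
      have hc2 : ‖z‖^(n+1+1) ≤ ‖z‖^2 := hzz1 n
      exact bound_helper2 (by positivity) hc1 (norm_nonneg _) hc2 (by positivity)
    linarith
  -- splitting of the b-coefficient sum
  have hSB : eta 1 * ‖b 1‖ + (∑' n, eta (n+2) * ‖b (n+2)‖) = ∑' n, eta (n+1) * ‖b (n+1)‖ :=
    (Summable.tsum_eq_zero_add hsb).symm
  have hb1eta : ‖b 1‖ ≤ eta 1 * ‖b 1‖ := by
    nlinarith [hetapos 0, norm_nonneg (b 1)]
  have htail_nonneg : (0:ℝ) ≤ ∑' n, eta (n+2) * ‖b (n+2)‖ :=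
    tsum_nonneg (fun n => mul_nonneg (le_trans zero_le_one (hetapos (n+1))) (norm_nonneg _))
  have hSA_nonneg : (0:ℝ) ≤ ∑' n, xi (n+2) * ‖a (n+2)‖ :=
    tsum_nonneg (fun n => mul_nonneg (le_trans zero_le_one (hxipos n)) (norm_nonneg _))
  -- the denominator is nonzero
  have hBpos : 0 < ‖alOboudiD lam v a b z‖ := by
    have htr : ‖z‖ ≤ ‖alOboudiD lam v a b z‖ + ‖∑' n, fav n‖ + ‖∑' n, fbv n‖ := by
      rw [hBeq]
      set S : ℂ := ∑' n, fav n with hSdef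
      set C : ℂ := (starRingEnd ℂ) ((-1:ℂ)^v * ∑' n, fbv n) with hCdef
      have hCn : ‖C‖ = ‖∑' n, fbv n‖ := by
        rw [hCdef, RCLike.norm_conj, norm_mul, norm_pow, norm_neg, norm_one, one_pow, one_mul]
      have e : z = ((z + S + C) - S) - C := by ring
      calc ‖z‖ = ‖((z + S + C) - S) - C‖ := by rw [← e]
        _ ≤ ‖(z + S + C) - S‖ + ‖C‖ := norm_sub_le _ _
        _ ≤ (‖z + S + C‖ + ‖S‖) + ‖C‖ := add_le_add (norm_sub_le _ _) le_rfl
        _ = ‖z + S + C‖ + ‖S‖ + ‖∑' n, fbv n‖ := by rw [hCn]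
    have hfn : ‖∑' n, fbv n‖ ≤ ∑' n, ‖fbv n‖ := norm_tsum_le_tsum_norm hfbvS
    have hz0' : 0 < ‖z‖ := norm_pos_iff.mpr hz0
    have hsum_le : (∑' n, xi (n+2)*‖a (n+2)‖) + (∑' n, eta (n+2) * ‖b (n+2)‖) ≤ 1 - ‖b 1‖ := by
      have h := hS1
      rw [← hSB] at h
      linarith [hb1eta]
    have hprod : (0:ℝ) < ‖z‖ * (1 - ‖b 1‖) * (1 - ‖z‖) :=
      mul_pos (mul_pos hz0' (by linarith : (0:ℝ) < 1 - ‖b 1‖)) (by linarith : (0:ℝ) < 1 - ‖z‖)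
    nlinarith [htr, hfavN, hfbvN, hfn, hSA_nonneg, htail_nonneg, hprod,
      mul_le_mul_of_nonneg_left hsum_le (sq_nonneg ‖z‖),
      norm_nonneg (∑' n, fav n), norm_nonneg (∑' n, fbv n)]
  have hBne : alOboudiD lam v a b z ≠ 0 := norm_pos_iff.mp hBpos
  exact re_ge_aux halpha1 hBne hmain
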